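/- Let P₀ and P₁ be probability measures on ℝ with cdfs F₀, F₁ and quantile functions F₀⁻¹, F₁⁻¹. Let J be the pushforward of Lebesgue measure on (0,1) under u ↦ (F₀⁻¹(1 − u), F₁⁻¹(u)) (the antitone coupling). Then J has first marginal P₀ and second marginal P₁, and J((−∞, x] × (−∞, y]) = max(F₀(x) + F₁(y) − 1, 0) for all x, y ∈ ℝ; that is, the antitone coupling attains the Fréchet–Hoeffding lower bound. -/

import Mathlib

open MeasureTheory Set Filter

/-- The cumulative distribution function of a measure on ℝ. -/
noncomputable def cdf (P : MeasureTheory.Measure ℝ) (y : ℝ) : ℝ := (P (Set.Iic y)).toReal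

/-- The quantile function (generalized inverse cdf) of a measure on ℝ. -/
noncomputable def quantile (P : MeasureTheory.Measure ℝ) (u : ℝ) : ℝ :=
  sInf {y : ℝ | u ≤ cdf P y}

lemma cdf_eq (P : Measure ℝ) [IsProbabilityMeasure P] (y : ℝ) :
    cdf P y = ProbabilityTheory.cdf P y :=
  (ProbabilityTheory.cdf_eq_real P y).symm

lemma cdf_nonneg' (P : Measure ℝ) [IsProbabilityMeasure P] (y : ℝ) : 0 ≤ cdf P y := by
  rw [cdf_eq]; exact ProbabilityTheory.cdf_nonneg P y

lemma cdf_le_one' (P : Measure ℝ) [IsProbabilityMeasure P] (y : ℝ) : cdf P y ≤ 1 := by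
  rw [cdf_eq]; exact ProbabilityTheory.cdf_le_one P y

lemma cdf_mono (P : Measure ℝ) [IsProbabilityMeasure P] : Monotone (cdf P) := by
  intro a b hab
  rw [cdf_eq, cdf_eq]
  exact ProbabilityTheory.monotone_cdf P hab

lemma cdf_set_nonempty (P : Measure ℝ) [IsProbabilityMeasure P] {u : ℝ} (hu1 : u < 1) :
    {y : ℝ | u ≤ cdf P y}.Nonempty := by
  have h := (ProbabilityTheory.tendsto_cdf_atTop P).eventually (eventually_gt_nhds hu1)
  obtain ⟨y, hy⟩ := h.exists
  exact ⟨y, by rw [mem_setOf_eq, cdf_eq]; exact hy.le⟩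

lemma cdf_set_bddBelow (P : Measure ℝ) [IsProbabilityMeasure P] {u : ℝ} (hu0 : 0 < u) :
    BddBelow {y : ℝ | u ≤ cdf P y} := by
  have h := (ProbabilityTheory.tendsto_cdf_atBot P).eventually (eventually_lt_nhds hu0)
  obtain ⟨z, hz⟩ := h.exists
  refine ⟨z, fun y hy => ?_⟩
  by_contra hlt
  push_neg at hlt
  have h2 : u ≤ ProbabilityTheory.cdf P z := by
    rw [← cdf_eq]; exact hy.trans (cdf_mono P hlt.le)
  exact absurd h2 (not_le.2 hz)

lemma le_cdf_quantile (P : Measure ℝ) [IsProbabilityMeasure P] {u : ℝ} (hu : u ∈ Ioo (0:ℝ) 1) :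
    u ≤ cdf P (quantile P u) := by
  have hne := cdf_set_nonempty P hu.2
  have hbdd := cdf_set_bddBelow P hu.1
  have h1 : ∀ y, quantile P u < y → u ≤ cdf P y := by
    intro y hy
    obtain ⟨s, hsS, hs⟩ := exists_lt_of_csInf_lt hne hy
    exact hsS.trans (cdf_mono P hs.le)
  rw [cdf_eq]
  have hrc : ContinuousWithinAt (ProbabilityTheory.cdf P) (Ioi (quantile P u)) (quantile P u) :=
    ((ProbabilityTheory.cdf P).right_continuous (quantile P u)).mono Ioi_subset_Ici_self
  refine ge_of_tendsto hrc ?_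
  filter_upwards [self_mem_nhdsWithin] with y hy
  rw [← cdf_eq]
  exact h1 y hy

lemma quantile_le_iff (P : Measure ℝ) [IsProbabilityMeasure P] {u y : ℝ}
    (hu : u ∈ Ioo (0:ℝ) 1) : quantile P u ≤ y ↔ u ≤ cdf P y := by
  constructor
  · intro h
    exact (le_cdf_quantile P hu).trans (cdf_mono P h)
  · intro h
    exact csInf_le (cdf_set_bddBelow P hu.1) h

lemma quantile_monotoneOn (P : Measure ℝ) [IsProbabilityMeasure P] :
    MonotoneOn (quantile P) (Ioo (0:ℝ) 1) := by
  intro u hu v hv huv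
  exact csInf_le_csInf (cdf_set_bddBelow P hu.1) (cdf_set_nonempty P hv.2)
    (fun y hy => le_trans huv hy)

lemma volume_between {a b : ℝ} {s : Set ℝ} (h1 : Ioo a b ⊆ s) (h2 : s ⊆ Icc a b) :
    volume s = ENNReal.ofReal (b - a) := by
  refine le_antisymm ((measure_mono h2).trans_eq Real.volume_Icc) ?_
  calc ENNReal.ofReal (b - a) = volume (Ioo a b) := Real.volume_Ioo.symm
    _ ≤ volume s := measure_mono h1

/-- The antitone coupling is a coupling of P0 and P1 attaining the Fréchet–Hoeffding
lower bound. -/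
theorem antitone_coupling_attains_lower_bound
    (P0 P1 : Measure ℝ) [IsProbabilityMeasure P0] [IsProbabilityMeasure P1]
    (J : Measure (ℝ × ℝ))
    (hJ : J = (volume.restrict (Ioo (0:ℝ) 1)).map
      (fun u => (quantile P0 (1 - u), quantile P1 u))) :
    J.map Prod.fst = P0 ∧ J.map Prod.snd = P1 ∧
    ∀ x y : ℝ, (J (Iic x ×ˢ Iic y)).toReal = max (cdf P0 x + cdf P1 y - 1) 0 := by
  subst hJ
  set μ := volume.restrict (Ioo (0:ℝ) 1) with hμ
  have hf0 : AEMeasurable (fun u => quantile P0 (1 - u)) μ := by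
    refine aemeasurable_restrict_of_antitoneOn measurableSet_Ioo ?_
    intro u hu v hv huv
    have h1 : (1 - v) ∈ Ioo (0:ℝ) 1 := ⟨by linarith [hv.2], by linarith [hv.1]⟩
    have h2 : (1 - u) ∈ Ioo (0:ℝ) 1 := ⟨by linarith [hu.2], by linarith [hu.1]⟩
    exact quantile_monotoneOn P0 h1 h2 (by linarith)
  have hf1 : AEMeasurable (quantile P1) μ :=
    aemeasurable_restrict_of_monotoneOn measurableSet_Ioo (quantile_monotoneOn P1)
  have hf : AEMeasurable (fun u => (quantile P0 (1 - u), quantile P1 u)) μ := hf0.prodMk hf1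
  have hμuniv : μ univ = 1 := by
    rw [hμ, Measure.restrict_apply_univ, Real.volume_Ioo]; norm_num
  -- first marginal
  have hfst : (μ.map (fun u => (quantile P0 (1 - u), quantile P1 u))).map Prod.fst = P0 := by
    rw [AEMeasurable.map_map_of_aemeasurable measurable_fst.aemeasurable hf,
      show ((Prod.fst : ℝ × ℝ → ℝ) ∘ fun u => (quantile P0 (1 - u), quantile P1 u))
        = fun u => quantile P0 (1 - u) from rfl]
    have : IsProbabilityMeasure (μ.map (fun u => quantile P0 (1 - u))) := by
      constructor
      rw [Measure.map_apply_of_aemeasurable hf0 MeasurableSet.univ, preimage_univ, hμuniv]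
    refine Measure.ext_of_Iic _ _ (fun x => ?_)
    rw [Measure.map_apply_of_aemeasurable hf0 measurableSet_Iic, hμ,
      Measure.restrict_apply' measurableSet_Ioo]
    set a := cdf P0 x with ha
    have ha0 : 0 ≤ a := cdf_nonneg' P0 x
    have ha1 : a ≤ 1 := cdf_le_one' P0 x
    have hvol : volume ((fun u => quantile P0 (1 - u)) ⁻¹' Iic x ∩ Ioo 0 1)
        = ENNReal.ofReal (1 - (1 - a)) := by
      refine volume_between ?_ ?_
      · intro u hu
        have hu01 : u ∈ Ioo (0:ℝ) 1 := ⟨by linarith [hu.1], hu.2⟩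
        have h1u : (1 - u) ∈ Ioo (0:ℝ) 1 := ⟨by linarith [hu01.2], by linarith [hu01.1]⟩
        refine ⟨?_, hu01⟩
        rw [mem_preimage, mem_Iic, quantile_le_iff P0 h1u]
        linarith [hu.1]
      · rintro u ⟨hux, hu01⟩
        have h1u : (1 - u) ∈ Ioo (0:ℝ) 1 := ⟨by linarith [hu01.2], by linarith [hu01.1]⟩
        rw [mem_preimage, mem_Iic, quantile_le_iff P0 h1u] at hux
        exact ⟨by linarith, hu01.2.le⟩
    rw [hvol]
    have : (1:ℝ) - (1 - a) = a := by ring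
    rw [this, ha, cdf, ENNReal.ofReal_toReal (measure_ne_top P0 _)]
  -- second marginal
  have hsnd : (μ.map (fun u => (quantile P0 (1 - u), quantile P1 u))).map Prod.snd = P1 := by
    rw [AEMeasurable.map_map_of_aemeasurable measurable_snd.aemeasurable hf]
    have : IsProbabilityMeasure (μ.map ((Prod.snd : ℝ × ℝ → ℝ) ∘
        fun u => (quantile P0 (1 - u), quantile P1 u))) := by
      constructor
      rw [show ((Prod.snd : ℝ × ℝ → ℝ) ∘ fun u => (quantile P0 (1 - u), quantile P1 u))
        = quantile P1 from rfl]
      rw [Measure.map_apply_of_aemeasurable hf1 MeasurableSet.univ, preimage_univ, hμuniv]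
    refine Measure.ext_of_Iic _ _ (fun y => ?_)
    rw [show ((Prod.snd : ℝ × ℝ → ℝ) ∘ fun u => (quantile P0 (1 - u), quantile P1 u))
      = quantile P1 from rfl]
    rw [Measure.map_apply_of_aemeasurable hf1 measurableSet_Iic, hμ,
      Measure.restrict_apply' measurableSet_Ioo]
    set b := cdf P1 y with hb
    have hb0 : 0 ≤ b := cdf_nonneg' P1 y
    have hb1 : b ≤ 1 := cdf_le_one' P1 y
    have hvol : volume (quantile P1 ⁻¹' Iic y ∩ Ioo 0 1) = ENNReal.ofReal (b - 0) := by
      refine volume_between ?_ ?_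
      · intro u hu
        have hu01 : u ∈ Ioo (0:ℝ) 1 := ⟨hu.1, by linarith [hu.2]⟩
        refine ⟨?_, hu01⟩
        rw [mem_preimage, mem_Iic, quantile_le_iff P1 hu01]
        linarith [hu.2]
      · rintro u ⟨huy, hu01⟩
        rw [mem_preimage, mem_Iic, quantile_le_iff P1 hu01] at huy
        exact ⟨hu01.1.le, huy⟩
    rw [hvol, sub_zero, hb, cdf, ENNReal.ofReal_toReal (measure_ne_top P1 _)]
  refine ⟨hfst, hsnd, fun x y => ?_⟩
  rw [Measure.map_apply_of_aemeasurable hf (measurableSet_Iic.prod measurableSet_Iic), hμ,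
    Measure.restrict_apply' measurableSet_Ioo]
  set a := cdf P0 x with ha
  set b := cdf P1 y with hb
  have ha0 : 0 ≤ a := cdf_nonneg' P0 x
  have ha1 : a ≤ 1 := cdf_le_one' P0 x
  have hb0 : 0 ≤ b := cdf_nonneg' P1 y
  have hb1 : b ≤ 1 := cdf_le_one' P1 y
  have hvol : volume ((fun u => (quantile P0 (1 - u), quantile P1 u)) ⁻¹' (Iic x ×ˢ Iic y)
      ∩ Ioo 0 1) = ENNReal.ofReal (b - (1 - a)) := by
    refine volume_between ?_ ?_
    · intro u hu
      have hu01 : u ∈ Ioo (0:ℝ) 1 := ⟨by linarith [hu.1], by linarith [hu.2]⟩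
      have h1u : (1 - u) ∈ Ioo (0:ℝ) 1 := ⟨by linarith [hu01.2], by linarith [hu01.1]⟩
      refine ⟨?_, hu01⟩
      rw [mem_preimage, mem_prod, mem_Iic, mem_Iic, quantile_le_iff P0 h1u,
        quantile_le_iff P1 hu01]
      exact ⟨by linarith [hu.1], hu.2.le⟩
    · rintro u ⟨hxy, hu01⟩
      have h1u : (1 - u) ∈ Ioo (0:ℝ) 1 := ⟨by linarith [hu01.2], by linarith [hu01.1]⟩
      rw [mem_preimage, mem_prod, mem_Iic, mem_Iic, quantile_le_iff P0 h1u,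
        quantile_le_iff P1 hu01] at hxy
      exact ⟨by linarith [hxy.1], hxy.2⟩
  rw [hvol, ENNReal.toReal_ofReal']
  congr 1
  ring
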